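/- Let X be an S-open subset of a product ∏_{t∈T} X_t of sets, let T' be a topology on X, let x_0 ∈ X, and let (f_n)_{n≥1} be a sequence of functions f_n : (X,T') → ℝ, each strongly separately continuous at x_0, such that the series ∑_{n=1}^∞ f_n converges uniformly on X to a function f. Then f is strongly separately continuous at x_0. -/

import Mathlib

open Function Filter Topology

/-- `Sigma1 x` (σ₁(x)): the set of points differing from `x` in at most one coordinate. -/
def Sigma1 {T : Type*} {X : T → Type*} (x : ∀ t, X t) : Set (∀ t, X t) :=
  {y | {t | y t ≠ x t}.Subsingleton}

/-- A set `A` is `S`-open if `σ₁(x) ⊆ A` for every `x ∈ A`. -/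
def SOpen {T : Type*} {X : T → Type*} (A : Set (∀ t, X t)) : Prop :=
  ∀ x ∈ A, Sigma1 x ⊆ A

theorem update_mem {T : Type*} [DecidableEq T] {X : T → Type*} {A : Set (∀ t, X t)}
    (hA : SOpen A) {x : ∀ t, X t} (hx : x ∈ A) (t : T) (v : X t) :
    Function.update x t v ∈ A := by
  apply hA x hx
  intro s hs s' hs'
  simp only [Set.mem_setOf_eq] at hs hs'
  have h1 : s = t := by
    by_contra h
    exact hs (Function.update_of_ne h v x)
  have h2 : s' = t := by
    by_contra h
    exact hs' (Function.update_of_ne h v x)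
  rw [h1, h2]

/-- The point `x_t^v`: `x` with its `t`-th coordinate replaced by `v`, as an element
of the `S`-open set `A`. -/
def updPt {T : Type*} [DecidableEq T] {X : T → Type*} {A : Set (∀ t, X t)}
    (hA : SOpen A) (x : ↥A) (t : T) (v : X t) : ↥A :=
  ⟨Function.update x.1 t v, update_mem hA x.2 t v⟩

/-- `f : (A, T') → Y` is strongly separately continuous at `a` (w.r.t. every variable):
for each `t`, `lim_{x → a} dist (f x) (f (x_t^a)) = 0`, the limit taken in `T'`. -/
def StrSepContAt {T : Type*} [DecidableEq T] {X : T → Type*} {A : Set (∀ t, X t)}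
    (hA : SOpen A) (T' : TopologicalSpace ↥A) {Y : Type*} [MetricSpace Y]
    (f : ↥A → Y) (a : ↥A) : Prop :=
  ∀ t : T, Filter.Tendsto (fun x : ↥A => dist (f x) (f (updPt hA x t (a.1 t))))
    (@nhds _ T' a) (nhds 0)

/-- A uniformly convergent series of functions strongly separately continuous at `x₀`
has a strongly separately continuous sum at `x₀`. -/
theorem strSepContAt_of_tendstoUniformly {T : Type*} [DecidableEq T] {X : T → Type*}
    {A : Set (∀ t, X t)} (hA : SOpen A) (T' : TopologicalSpace ↥A) (x₀ : ↥A)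
    (F : ℕ → ↥A → ℝ) (f : ↥A → ℝ)
    (hF : ∀ n : ℕ, StrSepContAt hA T' (F n) x₀)
    (hconv : TendstoUniformly (fun N x => ∑ n ∈ Finset.range N, F n x) f Filter.atTop) :
    StrSepContAt hA T' f x₀ := by
  intro t
  set g : ↥A → ↥A := fun x => updPt hA x t (x₀.1 t) with hg
  rw [Metric.tendsto_nhds]
  intro ε hε
  obtain ⟨N, hN⟩ := (Metric.tendstoUniformly_iff.1 hconv (ε/4) (by positivity)).exists
  set S : ↥A → ℝ := fun x => ∑ n ∈ Finset.range N, F n x with hS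
  have hsum : Filter.Tendsto (fun x : ↥A => ∑ n ∈ Finset.range N,
      dist (F n x) (F n (g x))) (@nhds _ T' x₀) (nhds 0) := by
    have := tendsto_finset_sum (Finset.range N) (fun n _ => hF n t)
    simpa using this
  have hSt : Filter.Tendsto (fun x : ↥A => dist (S x) (S (g x)))
      (@nhds _ T' x₀) (nhds 0) :=
    squeeze_zero (fun x => dist_nonneg) (fun x => dist_sum_sum_le _ _ _) hsum
  have hev : ∀ᶠ x : ↥A in @nhds _ T' x₀, dist (S x) (S (g x)) < ε/2 := by
    have := Metric.tendsto_nhds.1 hSt (ε/2) (by positivity)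
    filter_upwards [this] with x hx
    rwa [Real.dist_eq, sub_zero, abs_of_nonneg dist_nonneg] at hx
  filter_upwards [hev] with x hx
  rw [Real.dist_eq, sub_zero, abs_of_nonneg dist_nonneg]
  calc dist (f x) (f (g x)) ≤ dist (f x) (S x) + dist (S x) (S (g x)) + dist (S (g x)) (f (g x)) :=
        dist_triangle4 _ _ _ _
    _ < ε/4 + ε/2 + ε/4 := by
        gcongr
        · exact hN x
        · rw [dist_comm]; exact hN (g x)
    _ = ε := by ring
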